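/- Let (R,m,K) be a complete Noetherian local ring of prime characteristic p and let M be an Artinian R-module. Let τ_M = {f ∈ M^∨ : f(0*_M) = 0} be the annihilator in the Matlis dual M^∨ of the tight closure of zero in M. Then for every ideal I of R one has I* · τ_M = I · τ_M (as submodules of M^∨), where I* is the tight closure of I. -/

import Mathlib

open scoped TensorProduct Pointwise

universe u v w

section TightClosureDefs

variable (R : Type u) [CommRing R] (p : ℕ)

/-- `R^o`: the complement of the union of the minimal primes of `R`. -/
def Ro : Set R := {c | ∀ P ∈ minimalPrimes R, c ∉ P}

/-- The Frobenius power `I^{[q]}` of an ideal: the ideal generated by the `q`-th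
powers of the elements of `I`. -/
def frobeniusPower (I : Ideal R) (q : ℕ) : Ideal R :=
  Ideal.span ((fun x => x ^ q) '' (I : Set R))

/-- The tight closure `I*` of an ideal `I`: all `x` such that `c x^q ∈ I^{[q]}` for some
`c ∈ R^o` and all `q = p^e ≫ 0`. -/
def idealTC (I : Ideal R) : Set R :=
  {x | ∃ c ∈ Ro R, ∃ e₀ : ℕ, ∀ e ≥ e₀, c * x ^ p ^ e ∈ frobeniusPower R I (p ^ e)}

/-- `R^e`: `R` viewed as an `R`-algebra via the `e`-th iterated Frobenius `r ↦ r^{p^e}`. -/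
def FrobAlg (R : Type u) [CommRing R] (_p _e : ℕ) : Type u := R

instance FrobAlg.instCommRing (e : ℕ) : CommRing (FrobAlg R p e) := inferInstanceAs (CommRing R)

noncomputable instance FrobAlg.instAlgebra (e : ℕ) [ExpChar R p] : Algebra R (FrobAlg R p e) :=
  (iterateFrobenius R p e).toAlgebra

/-- The identity map of `R` into `FrobAlg R p e`. -/
def FrobAlg.mk (e : ℕ) : R → FrobAlg R p e := id

variable [ExpChar R p]

/-- `N^{[p^e]}_M`: the image of `F^e(N) → F^e(M)`, where `F^e(M) = R^e ⊗_R M` is the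
`e`-th Frobenius functor. -/
noncomputable def submoduleFrobPow {M : Type v} [AddCommGroup M] [Module R M]
    (N : Submodule R M) (e : ℕ) : Submodule R (FrobAlg R p e ⊗[R] M) :=
  LinearMap.range (LinearMap.lTensor (FrobAlg R p e) N.subtype)

/-- The tight closure `N*_M` of a submodule `N ⊆ M`: all `m` such that
`c ⊗ m ∈ N^{[q]}_M` for some `c ∈ R^o` and all `q = p^e ≫ 0`. -/
noncomputable def moduleTC {M : Type v} [AddCommGroup M] [Module R M]
    (N : Submodule R M) : Set M :=
  {m | ∃ c ∈ Ro R, ∃ e₀ : ℕ, ∀ e ≥ e₀,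
    (FrobAlg.mk R p e c) ⊗ₜ[R] m ∈ submoduleFrobPow R p N e}

/-- The finitistic tight closure `N*fg_M`: the union of `(N ∩ M')*_{M'}` over all
finitely generated submodules `M' ⊆ M`. -/
noncomputable def finitisticTC {M : Type v} [AddCommGroup M] [Module R M]
    (N : Submodule R M) : Set M :=
  ⋃ (M' : Submodule R M) (_ : M'.FG),
    (M'.subtype '' moduleTC R p (N.comap M'.subtype))

/-- A test element: `c ∈ R^o` such that `c I* ⊆ I` for every ideal `I`. -/
def IsTestElement (c : R) : Prop :=
  c ∈ Ro R ∧ ∀ I : Ideal R, ∀ x ∈ idealTC R p I, c * x ∈ I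

/-- A module test element: `c ∈ R^o` such that for every finitely generated module `M`,
every submodule `N ⊆ M`, every `x ∈ N*_M` and every `q = p^e`, `c ⊗ x ∈ N^{[q]}_M`. -/
def IsModuleTestElement (c : R) : Prop :=
  c ∈ Ro R ∧ ∀ (M : Type u) [AddCommGroup M] [Module R M], Module.Finite R M →
    ∀ (N : Submodule R M), ∀ x ∈ moduleTC R p N, ∀ e : ℕ,
      (FrobAlg.mk R p e c) ⊗ₜ[R] x ∈ submoduleFrobPow R p N e

/-- The annihilator, inside the Matlis-type dual `Hom_R(M, E)`, of a subset `S ⊆ M`. -/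
def annihilatorIn {M : Type v} {E : Type w} [AddCommGroup M] [Module R M]
    [AddCommGroup E] [Module R E] (S : Set M) : Submodule R (M →ₗ[R] E) where
  carrier := {f | ∀ x ∈ S, f x = 0}
  add_mem' := by intro f g hf hg x hx; simp [hf x hx, hg x hx]
  zero_mem' := by intro x hx; simp
  smul_mem' := by intro r f hf x hx; simp [hf x hx]

/-- The product `s · T` of a set of ring elements and a submodule: the submodule
generated by all products `a • t` with `a ∈ s`, `t ∈ T`. -/
def setSMulSubmodule {M : Type v} [AddCommGroup M] [Module R M]
    (s : Set R) (T : Submodule R M) : Submodule R M :=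
  Submodule.span R (s • (T : Set M))

/-- `E` is an injective hull of `M` over `R`: `E` is an injective module admitting an
essential embedding of `M`. -/
def IsInjectiveHull (M : Type v) (E : Type w) [AddCommGroup M] [Module R M]
    [AddCommGroup E] [Module R E] : Prop :=
  Module.Injective R E ∧ ∃ ι : M →ₗ[R] E, Function.Injective ι ∧
    ∀ N : Submodule R E, N ≠ ⊥ → N ⊓ LinearMap.range ι ≠ ⊥

/-- The test ideal `τ(R) = ⋂_M Ann_R (0*_M)`, where `M` runs through all finitely
generated `R`-modules. -/
noncomputable def testIdeal : Ideal R where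
  carrier := {c | ∀ (M : Type u) [AddCommGroup M] [Module R M], Module.Finite R M →
    ∀ x ∈ moduleTC R p (⊥ : Submodule R M), c • x = 0}
  add_mem' := by
    intro a b ha hb M _ _ hfin x hx
    rw [add_smul, ha M hfin x hx, hb M hfin x hx, add_zero]
  zero_mem' := by intro M _ _ hfin x hx; rw [zero_smul]
  smul_mem' := by
    intro r a ha M _ _ hfin x hx
    rw [smul_eq_mul, mul_smul, ha M hfin x hx, smul_zero]

/-- An `F`-finite ring: `R` is finitely generated as a module over its subring of
`p`-th powers, i.e. `R^1` is a finite `R`-module. -/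
def IsFFinite : Prop := Module.Finite R (FrobAlg R p 1)

/-- An ideal generated by a system of parameters: generated by `dim R` elements and
with radical the maximal ideal (i.e. primary to the maximal ideal). -/
def IsParameterIdeal [IsLocalRing R] (I : Ideal R) : Prop :=
  ∃ (n : ℕ) (x : Fin n → R), ringKrullDim R = n ∧ I = Ideal.span (Set.range x) ∧
    I.radical = IsLocalRing.maximalIdeal R

/-- The parameter test ideal `τ_par(R) = ⋂_I (I : I*)`, where `I` runs through the
ideals generated by systems of parameters. -/
def parameterTestIdeal [IsLocalRing R] : Ideal R where
  carrier := {c | ∀ I : Ideal R, IsParameterIdeal R I → ∀ z ∈ idealTC R p I, c * z ∈ I}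
  add_mem' := by
    intro a b ha hb I hI z hz
    rw [add_mul]; exact I.add_mem (ha I hI z hz) (hb I hI z hz)
  zero_mem' := by intro I hI z hz; rw [zero_mul]; exact I.zero_mem
  smul_mem' := by
    intro r a ha I hI z hz
    rw [smul_eq_mul, mul_assoc]; exact I.mul_mem_left r (ha I hI z hz)

/-- A parameter test element: an element of `τ_par(R) ∩ R^o`. -/
def IsParameterTestElement [IsLocalRing R] (c : R) : Prop :=
  c ∈ parameterTestIdeal R p ∧ c ∈ Ro R

end TightClosureDefs

/-- A Cohen–Macaulay local ring: a local ring admitting a system of parameters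
(`dim R` elements generating an ideal whose radical is the maximal ideal, here expressed
as the Jacobson radical `(⊥).jacobson`) that is a regular sequence. -/
def IsCohenMacaulayLocalRing (R : Type u) [CommRing R] : Prop :=
  IsLocalRing R ∧ ∃ (n : ℕ) (x : Fin n → R), ringKrullDim R = n ∧
    (Ideal.span (Set.range x)).radical = (⊥ : Ideal R).jacobson ∧
    RingTheory.Sequence.IsRegular R (List.ofFn x)



section AuxSmall

universe w'

open IsLocalRing

/-- If a submodule and the quotient by it are `w'`-small, so is the module. -/
lemma aux_small_of_submodule_quotient {R : Type u} [Ring R] {M : Type v} [AddCommGroup M]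
    [Module R M] (S : Submodule R M) [Small.{w'} S] [Small.{w'} (M ⧸ S)] : Small.{w'} M := by
  let σ : (M ⧸ S) → M := Function.surjInv (Submodule.Quotient.mk_surjective S)
  have hσ : ∀ q : M ⧸ S, (Submodule.Quotient.mk (σ q) : M ⧸ S) = q :=
    fun q => Function.surjInv_eq (Submodule.Quotient.mk_surjective S) q
  have hmem : ∀ m : M, m - σ (Submodule.Quotient.mk m) ∈ S := by
    intro m
    rw [← Submodule.Quotient.mk_eq_zero, Submodule.Quotient.mk_sub, hσ, sub_self]
  let f : M → (M ⧸ S) × S := fun m =>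
    (Submodule.Quotient.mk m, ⟨m - σ (Submodule.Quotient.mk m), hmem m⟩)
  have hf : Function.Injective f := by
    intro m₁ m₂ h
    have h1 : (Submodule.Quotient.mk m₁ : M ⧸ S) = Submodule.Quotient.mk m₂ :=
      congrArg Prod.fst h
    have h2 : m₁ - σ (Submodule.Quotient.mk m₁) = m₂ - σ (Submodule.Quotient.mk m₂) :=
      congrArg Subtype.val (congrArg Prod.snd h)
    rw [h1] at h2
    exact by linear_combination (norm := abel) h2
  exact small_of_injective hf

variable {R : Type u} [CommRing R] [IsNoetherianRing R] [IsLocalRing R]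

/-- A finitely generated module killed by the maximal ideal is small if the residue
field is small. -/
lemma aux_small_of_m_torsion [Small.{w'} (ResidueField R)]
    (M : Type u) [AddCommGroup M] [Module R M] [Module.Finite R M]
    (h : (maximalIdeal R) • (⊤ : Submodule R M) = ⊥) : Small.{w'} M := by
  obtain ⟨s, hs⟩ := Module.Finite.fg_top (R := R) (M := M)
  let σ : ResidueField R → R := Function.surjInv (residue_surjective (R := R))
  have hσ : ∀ q, residue R (σ q) = q := fun q => Function.surjInv_eq _ q
  let F : (↥s → ResidueField R) → M := fun c => ∑ y ∈ s.attach, σ (c y) • (y : M)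
  have hF : Function.Surjective F := by
    intro z
    have hz : z ∈ Submodule.span R (↑s : Set M) := hs ▸ Submodule.mem_top
    obtain ⟨f, -, hf⟩ := Submodule.mem_span_finset.mp hz
    refine ⟨fun y => residue R (f (y : M)), ?_⟩
    have key : ∀ y ∈ s.attach, σ (residue R (f (y : M))) • (y : M) = f (y : M) • (y : M) := by
      intro y _
      have hd : σ (residue R (f (y : M))) - f (y : M) ∈ maximalIdeal R := by
        have : residue R (σ (residue R (f (y : M))) - f (y : M)) = 0 := by
          rw [map_sub, hσ, sub_self]
        exact (Ideal.Quotient.eq_zero_iff_mem).mp this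
      have hz0 : (σ (residue R (f (y : M))) - f (y : M)) • (y : M) = 0 := by
        have : (σ (residue R (f (y : M))) - f (y : M)) • (y : M) ∈
            (maximalIdeal R) • (⊤ : Submodule R M) :=
          Submodule.smul_mem_smul hd Submodule.mem_top
        rw [h, Submodule.mem_bot] at this
        exact this
      rw [← sub_eq_zero, ← sub_smul]
      exact hz0
    calc F (fun y => residue R (f (y : M)))
        = ∑ y ∈ s.attach, f (y : M) • (y : M) := Finset.sum_congr rfl key
      _ = ∑ y ∈ s, f y • y := Finset.sum_attach s fun y => f y • y
      _ = z := hf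
  exact small_of_surjective hF

/-- Induction: a f.g. module killed by a power of the maximal ideal is small. -/
lemma aux_small_of_pow_torsion [Small.{w'} (ResidueField R)] :
    ∀ (n : ℕ) (M : Type u) [AddCommGroup M] [Module R M] [Module.Finite R M],
      ((maximalIdeal R) ^ n • (⊤ : Submodule R M) = ⊥) → Small.{w'} M := by
  intro n
  induction n with
  | zero =>
    intro M _ _ _ h
    rw [pow_zero, Ideal.one_eq_top, Submodule.top_smul] at h
    have hz : ∀ x : M, x = 0 := fun x => (Submodule.mem_bot R).mp (h ▸ Submodule.mem_top)
    have : Subsingleton M := ⟨fun a b => by rw [hz a, hz b]⟩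
    infer_instance
  | succ n ih =>
    intro M _ _ hfin h
    have hNoeth : IsNoetherian R M := isNoetherian_of_isNoetherianRing_of_finite R M
    set S : Submodule R M := (maximalIdeal R) • ⊤ with hSdef
    have hfinS : Module.Finite R ↥S := Module.Finite.iff_fg.mpr (IsNoetherian.noetherian S)
    have hS : (maximalIdeal R) ^ n • (⊤ : Submodule R ↥S) = ⊥ := by
      rw [eq_bot_iff]
      refine Submodule.smul_le.mpr fun r hr z _ => ?_
      rw [Submodule.mem_bot]
      apply Subtype.ext
      have h1 : r • (z : M) ∈ (maximalIdeal R) ^ n • S := Submodule.smul_mem_smul hr z.2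
      have h2 : (maximalIdeal R) ^ n • S = ⊥ := by
        rw [hSdef, ← Submodule.smul_assoc, smul_eq_mul, ← pow_succ, h]
      rw [h2, Submodule.mem_bot] at h1
      exact h1
    have hSmallS : Small.{w'} ↥S := ih ↥S hS
    have hfinQ : Module.Finite R (M ⧸ S) :=
      Module.Finite.of_surjective S.mkQ (Submodule.Quotient.mk_surjective S)
    have hq : (maximalIdeal R) • (⊤ : Submodule R (M ⧸ S)) = ⊥ := by
      rw [eq_bot_iff]
      refine Submodule.smul_le.mpr fun r hr z _ => ?_
      obtain ⟨y, rfl⟩ := Submodule.Quotient.mk_surjective S z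
      rw [Submodule.mem_bot, ← Submodule.Quotient.mk_smul, Submodule.Quotient.mk_eq_zero]
      exact Submodule.smul_mem_smul hr Submodule.mem_top
    have hSmallQ : Small.{w'} (M ⧸ S) := aux_small_of_m_torsion (M ⧸ S) hq
    exact aux_small_of_submodule_quotient S

/-- A complete Noetherian local ring is small if its residue field is. -/
lemma aux_small_ring [IsAdicComplete (maximalIdeal R) R] [Small.{w'} (ResidueField R)] :
    Small.{w'} R := by
  let U : ℕ → Submodule R R := fun n => (maximalIdeal R) ^ n • ⊤
  have hsmall : ∀ n, Small.{w'} (R ⧸ U n) := by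
    intro n
    have hfin : Module.Finite R (R ⧸ U n) :=
      Module.Finite.of_surjective (U n).mkQ (Submodule.Quotient.mk_surjective (U n))
    have hkill : (maximalIdeal R) ^ n • (⊤ : Submodule R (R ⧸ U n)) = ⊥ := by
      rw [eq_bot_iff]
      refine Submodule.smul_le.mpr fun r hr z _ => ?_
      obtain ⟨y, rfl⟩ := Submodule.Quotient.mk_surjective (U n) z
      rw [Submodule.mem_bot, ← Submodule.Quotient.mk_smul, Submodule.Quotient.mk_eq_zero]
      exact Submodule.smul_mem_smul hr Submodule.mem_top
    exact aux_small_of_pow_torsion n (R ⧸ U n) hkill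
  have : ∀ n, Small.{w'} (R ⧸ U n) := hsmall
  let f : R → ∀ n : ℕ, R ⧸ U n := fun r n => Submodule.Quotient.mk r
  have hf : Function.Injective f := by
    intro r₁ r₂ h
    have hmem : ∀ n : ℕ, r₁ - r₂ ∈ U n := by
      intro n
      rw [← Submodule.Quotient.mk_eq_zero, Submodule.Quotient.mk_sub, sub_eq_zero]
      exact congrFun h n
    have := IsHausdorff.haus (inferInstance : IsHausdorff (maximalIdeal R) R) (r₁ - r₂)
      (fun n => SModEq.zero.mpr (hmem n))
    exact sub_eq_zero.mp this
  exact small_of_injective hf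

end AuxSmall


section AuxTC

variable {R : Type u} [CommRing R] {p : ℕ} [Fact p.Prime] [CharP R p]

lemma aux_one_mem_Ro : (1 : R) ∈ Ro R := by
  intro P hP h
  exact hP.1.1.ne_top ((Ideal.eq_top_iff_one P).mpr h)

lemma aux_mul_mem_Ro {c₁ c₂ : R} (h₁ : c₁ ∈ Ro R) (h₂ : c₂ ∈ Ro R) : c₁ * c₂ ∈ Ro R := by
  intro P hP hm
  exact (hP.1.1.mem_or_mem hm).elim (h₁ P hP) (h₂ P hP)

lemma aux_prod_mem_Ro {ι : Type*} (s : Finset ι) (c : ι → R) (h : ∀ i ∈ s, c i ∈ Ro R) :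
    (∏ i ∈ s, c i) ∈ Ro R :=
  Finset.prod_induction c (· ∈ Ro R) (fun _ _ => aux_mul_mem_Ro) aux_one_mem_Ro h

/-- Scalar multiplication by `FrobAlg` elements on `FrobAlg R p e` unravels to
Frobenius-twisted multiplication. -/
lemma aux_frob_smul (e : ℕ) (r : R) (z : FrobAlg R p e) :
    r • z = FrobAlg.mk R p e (r ^ p ^ e) * z := by
  rw [Algebra.smul_def]
  rfl

/-- Pulling a scalar across the tensor picks up a Frobenius power. -/
lemma aux_tmul_pull {M : Type v} [AddCommGroup M] [Module R M] (e : ℕ)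
    (s : FrobAlg R p e) (a : R) (m : M) :
    s ⊗ₜ[R] (a • m) = (FrobAlg.mk R p e (a ^ p ^ e) * s) ⊗ₜ[R] m := by
  rw [TensorProduct.tmul_smul, TensorProduct.smul_tmul', aux_frob_smul]

/-- `N^{[q]}` is stable under multiplication by elements of `R^e`. -/
lemma aux_frobPow_smul_mem {M : Type v} [AddCommGroup M] [Module R M]
    {N : Submodule R M} {e : ℕ} (a : FrobAlg R p e)
    {z : FrobAlg R p e ⊗[R] M} (hz : z ∈ submoduleFrobPow R p N e) :
    a • z ∈ submoduleFrobPow R p N e := by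
  obtain ⟨y, rfl⟩ := hz
  refine ⟨a • y, ?_⟩
  have hfn : ∀ w, N.subtype.lTensor (FrobAlg R p e) w
      = N.subtype.baseChange (FrobAlg R p e) w :=
    fun w => (congrFun (LinearMap.baseChange_eq_ltensor (A := FrobAlg R p e) N.subtype) w).symm
  rw [hfn, hfn, map_smul]

/-- `0*_M` is a submodule. -/
noncomputable def auxZ (p : ℕ) [Fact p.Prime] [CharP R p]
    (M : Type v) [AddCommGroup M] [Module R M] : Submodule R M where
  carrier := moduleTC R p (⊥ : Submodule R M)
  zero_mem' := ⟨1, aux_one_mem_Ro, 0, fun e _ => by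
    rw [TensorProduct.tmul_zero]; exact Submodule.zero_mem _⟩
  add_mem' := by
    rintro m₁ m₂ ⟨c₁, hc₁, e₁, h₁⟩ ⟨c₂, hc₂, e₂, h₂⟩
    refine ⟨c₁ * c₂, aux_mul_mem_Ro hc₁ hc₂, max e₁ e₂, fun e he => ?_⟩
    have ha : FrobAlg.mk R p e c₂ • (FrobAlg.mk R p e c₁ ⊗ₜ[R] m₁)
        = FrobAlg.mk R p e (c₁ * c₂) ⊗ₜ[R] m₁ := by
      rw [TensorProduct.smul_tmul', smul_eq_mul]
      show FrobAlg.mk R p e (c₂ * c₁) ⊗ₜ[R] m₁ = _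
      rw [mul_comm c₂ c₁]
    have hb : FrobAlg.mk R p e c₁ • (FrobAlg.mk R p e c₂ ⊗ₜ[R] m₂)
        = FrobAlg.mk R p e (c₁ * c₂) ⊗ₜ[R] m₂ := by
      rw [TensorProduct.smul_tmul', smul_eq_mul]
      rfl
    have key : FrobAlg.mk R p e (c₁ * c₂) ⊗ₜ[R] (m₁ + m₂)
        = FrobAlg.mk R p e c₂ • (FrobAlg.mk R p e c₁ ⊗ₜ[R] m₁)
          + FrobAlg.mk R p e c₁ • (FrobAlg.mk R p e c₂ ⊗ₜ[R] m₂) := by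
      rw [TensorProduct.tmul_add, ha, hb]
    rw [key]
    exact Submodule.add_mem _
      (aux_frobPow_smul_mem _ (h₁ e (le_trans (le_max_left _ _) he)))
      (aux_frobPow_smul_mem _ (h₂ e (le_trans (le_max_right _ _) he)))
  smul_mem' := by
    rintro r m ⟨c, hc, e₀, h⟩
    exact ⟨c, hc, e₀, fun e he => by
      rw [TensorProduct.tmul_smul]
      exact Submodule.smul_mem _ r (h e he)⟩

lemma aux_frobPower_le {n : ℕ} (a : Fin n → R) (e : ℕ) :
    frobeniusPower R (Ideal.span (Set.range a)) (p ^ e)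
      ≤ Ideal.span (Set.range fun i => a i ^ p ^ e) := by
  refine Ideal.span_le.mpr ?_
  rintro _ ⟨y, hy, rfl⟩
  have hy' : y ∈ Submodule.span R (Set.range a) := hy
  refine Submodule.span_induction
    (p := fun y _ => y ^ p ^ e ∈ Ideal.span (Set.range fun i => a i ^ p ^ e))
    ?_ ?_ ?_ ?_ hy'
  · rintro _ ⟨i, rfl⟩
    exact Ideal.subset_span ⟨i, rfl⟩
  · show (0 : R) ^ p ^ e ∈ _
    rw [zero_pow (pow_ne_zero e (Fact.out : p.Prime).ne_zero)]
    exact Ideal.zero_mem _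
  · intro u v _ _ hu hv
    show (u + v) ^ p ^ e ∈ _
    rw [add_pow_char_pow]
    exact Ideal.add_mem _ hu hv
  · intro r u _ hu
    show (r • u) ^ p ^ e ∈ _
    rw [smul_eq_mul, mul_pow]
    exact Ideal.mul_mem_left _ _ hu

/-- The key tight-closure computation: if `x ∈ I*` and `a_i • m ∈ 0*_M` for generators
`a_i` of `I`, then `x • m ∈ 0*_M`. -/
lemma aux_key {n : ℕ} (a : Fin n → R) (x : R)
    (hx : x ∈ idealTC R p (Ideal.span (Set.range a)))
    {M : Type v} [AddCommGroup M] [Module R M] (m : M)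
    (hm : ∀ i, a i • m ∈ moduleTC R p (⊥ : Submodule R M)) :
    x • m ∈ moduleTC R p (⊥ : Submodule R M) := by
  obtain ⟨c, hc, e₀, hcx⟩ := hx
  choose cc hcc ee hee using hm
  refine ⟨(∏ i, cc i) * c,
    aux_mul_mem_Ro (aux_prod_mem_Ro _ _ fun i _ => hcc i) hc,
    max e₀ (Finset.univ.sup ee), fun e he => ?_⟩
  have hq : c * x ^ p ^ e ∈ Ideal.span (Set.range fun i => a i ^ p ^ e) :=
    aux_frobPower_le a e (hcx e (le_trans (le_max_left _ _) he))
  obtain ⟨r, hr⟩ := (Submodule.mem_span_range_iff_exists_fun R).mp hq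
  simp only [smul_eq_mul] at hr
  have hR : x ^ p ^ e * ((∏ i, cc i) * c)
      = ∑ i, r i * (∏ j ∈ Finset.univ.erase i, cc j) * (a i ^ p ^ e * cc i) := by
    have hterm : ∀ i : Fin n, r i * (∏ j ∈ Finset.univ.erase i, cc j) * (a i ^ p ^ e * cc i)
        = r i * a i ^ p ^ e * ∏ j, cc j := by
      intro i
      rw [← Finset.mul_prod_erase Finset.univ cc (Finset.mem_univ i)]
      ring
    rw [Finset.sum_congr rfl fun i _ => hterm i, ← Finset.sum_mul, hr]
    ring
  have key : FrobAlg.mk R p e ((∏ i, cc i) * c) ⊗ₜ[R] (x • m)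
      = ∑ i, FrobAlg.mk R p e (r i * ∏ j ∈ Finset.univ.erase i, cc j) •
          (FrobAlg.mk R p e (cc i) ⊗ₜ[R] (a i • m)) := by
    rw [aux_tmul_pull]
    have h1 : (FrobAlg.mk R p e (x ^ p ^ e) * FrobAlg.mk R p e ((∏ i, cc i) * c))
        = FrobAlg.mk R p e (∑ i, r i * (∏ j ∈ Finset.univ.erase i, cc j)
            * (a i ^ p ^ e * cc i)) := by
      show x ^ p ^ e * ((∏ i, cc i) * c) = _
      exact hR
    rw [h1]
    have h2 : ∀ i : Fin n, FrobAlg.mk R p e (r i * ∏ j ∈ Finset.univ.erase i, cc j) •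
        (FrobAlg.mk R p e (cc i) ⊗ₜ[R] (a i • m))
        = FrobAlg.mk R p e (r i * (∏ j ∈ Finset.univ.erase i, cc j) * (a i ^ p ^ e * cc i))
            ⊗ₜ[R] m := by
      intro i
      rw [aux_tmul_pull, TensorProduct.smul_tmul', smul_eq_mul]
      rfl
    rw [Finset.sum_congr rfl fun i _ => h2 i]
    exact TensorProduct.sum_tmul Finset.univ
      (fun i => FrobAlg.mk R p e (r i * (∏ j ∈ Finset.univ.erase i, cc j)
        * (a i ^ p ^ e * cc i))) m
  rw [key]
  refine Submodule.sum_mem _ fun i _ => aux_frobPow_smul_mem _ ?_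
  exact hee i e (le_trans (le_trans (Finset.le_sup (Finset.mem_univ i)) (le_max_right _ _)) he)

/-- Every element of `I` lies in `I*`. -/
lemma aux_subset_idealTC [Nontrivial R] {I : Ideal R} {x : R} (hx : x ∈ I) :
    x ∈ idealTC R p I := by
  refine ⟨1, aux_one_mem_Ro, 0, fun e _ => ?_⟩
  rw [one_mul]
  exact Ideal.subset_span ⟨x, hx, rfl⟩

end AuxTC

/-- For a complete Noetherian local ring `(R,m,K)` of prime
characteristic `p` and an Artinian `R`-module `M`, the test module
`τ_M = Ann_{M^∨}(0*_M) ⊆ M^∨ = Hom_R(M, E_R(K))` satisfies `I* · τ_M = I · τ_M`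
for every ideal `I` of `R`. -/
theorem tight_closure_strong_test_module
    (R : Type u) [CommRing R] [IsNoetherianRing R] [IsLocalRing R]
    (p : ℕ) [Fact p.Prime] [CharP R p]
    [IsAdicComplete (IsLocalRing.maximalIdeal R) R]
    (M : Type v) [AddCommGroup M] [Module R M] [IsArtinian R M]
    (E : Type w) [AddCommGroup E] [Module R E]
    (hE : IsInjectiveHull R (IsLocalRing.ResidueField R) E)
    (I : Ideal R) :
    setSMulSubmodule R (idealTC R p I)
        (annihilatorIn R (E := E) (moduleTC R p (⊥ : Submodule R M))) =
      I • annihilatorIn R (E := E) (moduleTC R p (⊥ : Submodule R M)) := by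
  classical
  obtain ⟨hinj, ι, hι, -⟩ := hE
  haveI : Module.Injective R E := hinj
  haveI : Small.{w} (IsLocalRing.ResidueField R) := small_of_injective hι
  haveI : Small.{w} R := aux_small_ring
  haveI : Nontrivial R := CharP.nontrivial_of_char_ne_one (Fact.out : p.Prime).ne_one
  obtain ⟨n, a, ha⟩ :=
    Submodule.fg_iff_exists_fin_generating_family.mp (IsNoetherian.noetherian I)
  set N := annihilatorIn R (E := E) (moduleTC R p (⊥ : Submodule R M)) with hNdef
  refine le_antisymm ?_ ?_
  · -- hard direction : I* • N ⊆ I • N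
    refine Submodule.span_le.mpr ?_
    rintro z hz
    rw [Set.mem_smul] at hz
    obtain ⟨x, hx, g, hg, rfl⟩ := hz
    set Z : Submodule R M := auxZ p M with hZdef
    set φ : M →ₗ[R] (Fin n → M ⧸ Z) :=
      LinearMap.pi fun i => Z.mkQ ∘ₗ LinearMap.lsmul R M (a i) with hφdef
    have hker : LinearMap.ker φ ≤ LinearMap.ker (x • g) := by
      intro m hm
      have h1 : ∀ i, a i • m ∈ moduleTC R p (⊥ : Submodule R M) := by
        intro i
        have h0 : Z.mkQ (a i • m) = 0 := congrFun (LinearMap.mem_ker.mp hm) i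
        have : a i • m ∈ Z := by
          rwa [Submodule.mkQ_apply, Submodule.Quotient.mk_eq_zero] at h0
        exact this
      have h2 : x • m ∈ moduleTC R p (⊥ : Submodule R M) := by
        refine aux_key a x ?_ m h1
        exact (show Ideal.span (Set.range a) = I from ha) ▸ hx
      rw [LinearMap.mem_ker, LinearMap.smul_apply, ← map_smul]
      exact hg _ h2
    set gbar : M ⧸ (LinearMap.ker φ) →ₗ[R] E := (LinearMap.ker φ).liftQ (x • g) hker
      with hgbar
    set φ' : M ⧸ (LinearMap.ker φ) →ₗ[R] (Fin n → M ⧸ Z) :=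
      (LinearMap.ker φ).liftQ φ le_rfl with hφ'def
    have hφ' : Function.Injective φ' := by
      rw [← LinearMap.ker_eq_bot]
      exact Submodule.ker_liftQ_eq_bot _ _ _ le_rfl
    obtain ⟨h, hh⟩ := Module.Injective.extension_property R E
      (M ⧸ LinearMap.ker φ) (Fin n → M ⧸ Z) φ' hφ' gbar
    set gi : Fin n → (M →ₗ[R] E) :=
      fun i => h ∘ₗ LinearMap.single R (fun _ : Fin n => M ⧸ Z) i ∘ₗ Z.mkQ with hgi
    have hgiN : ∀ i, gi i ∈ N := by
      intro i y hy
      have hy0 : Z.mkQ y = 0 := by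
        rw [Submodule.mkQ_apply, Submodule.Quotient.mk_eq_zero]
        exact hy
      show h (LinearMap.single R (fun _ : Fin n => M ⧸ Z) i (Z.mkQ y)) = 0
      rw [hy0, map_zero, map_zero]
    have hsum : x • g = ∑ i, a i • gi i := by
      ext m
      have e0 : (x • g) m = h (φ m) := by
        have t1 : gbar (Submodule.Quotient.mk m) = (x • g) m := Submodule.liftQ_apply _ _ _
        have t2 := DFunLike.congr_fun hh (Submodule.Quotient.mk m : M ⧸ LinearMap.ker φ)
        have t3 : φ' (Submodule.Quotient.mk m) = φ m := Submodule.liftQ_apply _ _ _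
        rw [← t1, ← t2, LinearMap.comp_apply, t3]
      have e2 : φ m = ∑ i, LinearMap.single R (fun _ : Fin n => M ⧸ Z) i
          (Z.mkQ (a i • m)) := (Finset.univ_sum_single (φ m)).symm
      have e4 : ∀ i, h (LinearMap.single R (fun _ : Fin n => M ⧸ Z) i (Z.mkQ (a i • m)))
          = (a i • gi i) m := by
        intro i
        rw [show Z.mkQ (a i • m) = a i • Z.mkQ m from map_smul Z.mkQ (a i) m,
          map_smul, map_smul]
        rfl
      rw [LinearMap.sum_apply, e0, e2, map_sum]
      exact Finset.sum_congr rfl fun i _ => e4 i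
    rw [hsum]
    refine Submodule.sum_mem _ fun i _ => ?_
    refine Submodule.smul_mem_smul ?_ (hgiN i)
    rw [← ha]
    exact Ideal.subset_span ⟨i, rfl⟩
  · -- easy direction : I • N ⊆ span (I* • N)
    refine Submodule.smul_le.mpr fun r hr g hg => ?_
    refine Submodule.subset_span ?_
    exact Set.mem_smul.mpr ⟨r, aux_subset_idealTC hr, g, hg, rfl⟩
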